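/- Let d ≥ 1, let 1 < p ≤ 2, and let x ∈ ℝ^d have all coordinates nonzero (x_i ≠ 0 for every i). Then the function F : ℝ^d → ℝ, F(y) = ‖y‖_p, is twice differentiable at x, and its Hessian H(x) satisfies, in the positive semidefinite order, H(x) ⪰ (p − 1)·d^{−3(2−p)/(2p)}·‖x‖₂^{−1}·(I_d − x·xᵀ/‖x‖₂²). -/

import Mathlib

open Filter


lemma sq_rpow_abs (p t : ℝ) : ((t^2 : ℝ)) ^ (p/2) = |t| ^ p := by
  rw [← sq_abs, ← Real.rpow_natCast |t| 2, ← Real.rpow_mul (abs_nonneg t)]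
  norm_num
  rw [show (2:ℝ)*(p/2) = p by ring]

lemma aux1 (a b q t : ℝ) (hs : a + t*b ≠ 0) :
    HasDerivAt (fun s => ((a + s*b)^2) ^ q) (2*q*((a+t*b)^2)^(q-1) * ((a+t*b) * b)) t := by
  have hlin : HasDerivAt (fun s : ℝ => a + s*b) b t := by
    simpa using ((hasDerivAt_id t).mul_const b).const_add a
  have hsq : HasDerivAt (fun s : ℝ => (a + s*b)^2) (2*(a+t*b)*b) t := by
    simpa [pow_one] using hlin.fun_pow 2
  have hr := (Real.hasDerivAt_rpow_const (p := q) (Or.inl (pow_ne_zero 2 hs))).comp t hsq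
  simp only [Function.comp_def] at hr
  convert hr using 1
  · rfl
  · rfl
  ring

lemma aux2 (a b q c : ℝ) (ha : a ≠ 0) :
    HasDerivAt (fun t => c * ((a+t*b)^2)^q * ((a+t*b) * b)) (c * b^2 * ((2*q+1) * (a^2)^q)) 0 := by
  have ha2 : (0:ℝ) < a^2 := by positivity
  have hA : HasDerivAt (fun t : ℝ => ((a+t*b)^2)^q) (2*q*(a^2)^(q-1) * (a*b)) 0 := by
    simpa using aux1 a b q 0 (by simpa using ha)
  have hlin : HasDerivAt (fun t : ℝ => (a + t*b)*b) (b*b) 0 := by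
    have : HasDerivAt (fun s : ℝ => a + s*b) b 0 := by
      simpa using ((hasDerivAt_id 0).mul_const b).const_add a
    simpa using this.mul_const b
  have := (hA.const_mul c).fun_mul hlin
  simp only [zero_mul, add_zero] at this
  convert this using 1
  · rfl
  · rfl
  have key : (a^2:ℝ)^(q-1) * a^2 = (a^2)^q := by
    nth_rewrite 2 [← Real.rpow_one (a^2)]
    rw [← Real.rpow_add ha2]
    norm_num
  linear_combination (-2*q*c*b^2) * key

lemma contDiffF (d : ℕ) (p : ℝ) (hd : 1 ≤ d) (y : EuclideanSpace ℝ (Fin d)) (hy : ∀ i, y i ≠ 0) :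
    ContDiffAt ℝ 2 (fun z : EuclideanSpace ℝ (Fin d) => (∑ i, ((z i)^2) ^ (p/2)) ^ (1/p)) y := by
  have hsum : ContDiffAt ℝ 2 (fun z : EuclideanSpace ℝ (Fin d) => ∑ i, ((z i)^2)^(p/2)) y := by
    apply ContDiffAt.sum
    intro i _
    have hin : ContDiffAt ℝ 2 (fun z : EuclideanSpace ℝ (Fin d) => (z i)^2) y :=
      ((EuclideanSpace.proj (𝕜 := ℝ) i).contDiff.pow 2).contDiffAt
    exact (Real.contDiffAt_rpow_const_of_ne (pow_ne_zero 2 (hy i))).comp y hin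
  have hpos : 0 < ∑ i, ((y i)^2)^(p/2) := by
    apply Finset.sum_pos
    · intro i _
      exact Real.rpow_pos_of_pos ((sq_nonneg _).lt_of_ne' (pow_ne_zero 2 (hy i))) _
    · haveI : NeZero d := ⟨by omega⟩
      exact Finset.univ_nonempty
  exact (Real.contDiffAt_rpow_const_of_ne hpos.ne').comp y hsum


lemma partA (d : ℕ) (hd : 1 ≤ d) (p : ℝ) (hp0 : 0 < p)
    (x u : EuclideanSpace ℝ (Fin d)) (hx : ∀ i, x i ≠ 0) :
    fderiv ℝ (fderiv ℝ (fun z : EuclideanSpace ℝ (Fin d) => (∑ i, ((z i)^2) ^ (p/2)) ^ (1/p))) x u u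
      = (p-1) * ((∑ i, ((x i)^2)^(p/2))^(1/p-1) * (∑ i, ((x i)^2)^(p/2-1) * (u i)^2)
          - (∑ i, ((x i)^2)^(p/2))^(1/p-2) * (∑ i, ((x i)^2)^(p/2-1) * (x i * u i))^2) := by
  haveI : NeZero d := ⟨by omega⟩
  set F : EuclideanSpace ℝ (Fin d) → ℝ :=
    fun z => (∑ i, ((z i)^2) ^ (p/2)) ^ (1/p) with hFdef
  set S : ℝ := ∑ i, ((x i)^2)^(p/2) with hSdef
  set G : ℝ := ∑ i, ((x i)^2)^(p/2-1) * (x i * u i) with hGdef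
  set W : ℝ := ∑ i, ((x i)^2)^(p/2-1) * (u i)^2 with hWdef
  set D : ℝ := (p-1) * (S^(1/p-1) * W - S^(1/p-2) * G^2) with hDdef
  set h : ℝ → ℝ := fun t => ∑ i, ((x i + t * u i)^2)^(p/2) with hhdef
  set h1 : ℝ → ℝ := fun t => ∑ i, p * ((x i + t*u i)^2)^(p/2-1) * ((x i + t*u i) * u i) with h1def
  set ψ : ℝ → ℝ := fun t => 1/p * (h t)^(1/p-1) * h1 t with hψdef
  have hcoord : ∀ (t : ℝ) (i), (x + t • u) i = x i + t * u i := fun t i => rfl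
  have hL : ∀ t : ℝ, HasDerivAt (fun s : ℝ => x + s • u) u t := fun t => by
    simpa using ((hasDerivAt_id t).smul_const u).const_add x
  have hx0 : ∀ i, x i + 0 * u i ≠ 0 := fun i => by simpa using hx i
  -- h has derivative h1
  have hh : ∀ t : ℝ, (∀ i, x i + t*u i ≠ 0) → HasDerivAt h (h1 t) t := by
    intro t ht
    have := HasDerivAt.fun_sum (fun i (_ : i ∈ Finset.univ) => aux1 (x i) (u i) (p/2) t (ht i))
    rw [h1def]
    convert this using 1
    · rfl
    · rfl
    exact Finset.sum_congr rfl fun i _ => by ring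
  have hhpos : ∀ t : ℝ, (∀ i, x i + t*u i ≠ 0) → 0 < h t := by
    intro t ht
    apply Finset.sum_pos
    · intro i _
      exact Real.rpow_pos_of_pos ((sq_nonneg _).lt_of_ne' (pow_ne_zero 2 (ht i))) _
    · exact Finset.univ_nonempty
  -- F along the line
  have hFL : (fun s : ℝ => F (x + s • u)) = fun s => (h s)^(1/p) := rfl
  have hg : ∀ t : ℝ, (∀ i, x i + t*u i ≠ 0) → HasDerivAt (fun s : ℝ => F (x + s • u)) (ψ t) t := by
    intro t ht
    rw [hFL]
    have := (Real.hasDerivAt_rpow_const (p := 1/p) (Or.inl (hhpos t ht).ne')).comp t (hh t ht)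
    simp only [Function.comp_def] at this
    simpa [hψdef, mul_assoc, mul_comm, mul_left_comm] using this
  -- values at 0
  have hh0 : h 0 = S := by simp [hhdef, hSdef]
  have hh10 : h1 0 = p * G := by
    simp only [h1def, hGdef, zero_mul, add_zero, Finset.mul_sum]
    exact Finset.sum_congr rfl fun i _ => by ring
  -- ψ has derivative D at 0
  have hψD : HasDerivAt ψ D 0 := by
    have hA : HasDerivAt (fun t : ℝ => (h t)^(1/p-1)) ((1/p-1) * S^(1/p-1-1) * (p*G)) 0 := by
      have := (Real.hasDerivAt_rpow_const (p := 1/p-1)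
        (Or.inl (hhpos 0 hx0).ne')).comp 0 (hh 0 hx0)
      simp only [Function.comp_def] at this
      rw [hh0, hh10] at this
      convert this using 1
    have hB : HasDerivAt h1 (p * (p-1) * W) 0 := by
      have := HasDerivAt.fun_sum (fun i (_ : i ∈ Finset.univ) => aux2 (x i) (u i) (p/2-1) p (hx i))
      rw [h1def]
      convert this using 1
      · rfl
      · rfl
      rw [hWdef, Finset.mul_sum]
      exact Finset.sum_congr rfl fun i _ => by ring
    have hprod := (hA.const_mul (1/p)).fun_mul hB
    rw [hh0, hh10] at hprod
    convert hprod using 1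
    · rfl
    · rfl
    rw [hDdef, show (1/p-1-1 : ℝ) = 1/p - 2 by ring]
    field_simp
    ring
  -- eventually all coordinates nonzero
  have hV : ∀ᶠ t in nhds (0:ℝ), ∀ i, x i + t * u i ≠ 0 := by
    rw [eventually_all]
    intro i
    have hc : ContinuousAt (fun t : ℝ => x i + t * u i) 0 := by fun_prop
    have := hc.tendsto.eventually_ne (by simpa using hx i)
    simpa using this
  -- identify fderiv F along the line with ψ
  have hdF : ∀ t : ℝ, (∀ i, x i + t*u i ≠ 0) →
      fderiv ℝ F (x + t • u) u = ψ t := by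
    intro t ht
    have hcd : ContDiffAt ℝ 2 F (x + t • u) :=
      contDiffF d p hd (x + t • u) (fun i => ht i)
    have hdiff : DifferentiableAt ℝ F (x + t • u) := hcd.differentiableAt (by norm_num)
    have h1' := hdiff.hasFDerivAt.comp_hasDerivAt t (hL t)
    exact h1'.unique (hg t ht)
  have hH : HasFDerivAt (fderiv ℝ F) (fderiv ℝ (fderiv ℝ F) x) x := by
    have h2 := contDiffF d p hd x hx
    exact ((h2.fderiv_right (m := 1) (by norm_num)).differentiableAt one_ne_zero).hasFDerivAt
  have hc : HasDerivAt (fun t : ℝ => fderiv ℝ F (x + t • u)) (fderiv ℝ (fderiv ℝ F) x u) 0 := by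
    have hHx : HasFDerivAt (fderiv ℝ F) (fderiv ℝ (fderiv ℝ F) x) (x + (0:ℝ) • u) := by
      simpa using hH
    have := hHx.comp_hasDerivAt 0 (hL 0)
    simpa [Function.comp_def] using this
  have heval : HasDerivAt (fun t : ℝ => fderiv ℝ F (x + t • u) u)
      (fderiv ℝ (fderiv ℝ F) x u u) 0 := by
    have := hc.clm_apply (hasDerivAt_const 0 u)
    simpa using this
  have hEq : (fun t : ℝ => fderiv ℝ F (x + t • u) u) =ᶠ[nhds 0] ψ :=
    hV.mono fun t ht => hdF t ht
  have hψD' : HasDerivAt (fun t : ℝ => fderiv ℝ F (x + t • u) u) D 0 :=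
    hψD.congr_of_eventuallyEq hEq
  exact heval.unique hψD'

set_option maxHeartbeats 1000000 in
lemma partB (d : ℕ) (hd : 1 ≤ d) (p : ℝ) (hp1 : 1 < p) (hp2 : p ≤ 2)
    (x u : EuclideanSpace ℝ (Fin d)) (hx : ∀ i, x i ≠ 0) :
    (p - 1) * (d : ℝ) ^ (-(3 * (2 - p)) / (2 * p)) * ‖x‖⁻¹ *
        (‖u‖ ^ 2 - (inner ℝ x u : ℝ) ^ 2 / ‖x‖ ^ 2)
      ≤ (p-1) * ((∑ i, ((x i)^2)^(p/2))^(1/p-1) * (∑ i, ((x i)^2)^(p/2-1) * (u i)^2)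
          - (∑ i, ((x i)^2)^(p/2))^(1/p-2) * (∑ i, ((x i)^2)^(p/2-1) * (x i * u i))^2) := by
  haveI : NeZero d := ⟨by omega⟩
  have hp0 : (0:ℝ) < p := by linarith
  set S : ℝ := ∑ i, ((x i)^2)^(p/2) with hSdef
  set G : ℝ := ∑ i, ((x i)^2)^(p/2-1) * (x i * u i) with hGdef
  set W : ℝ := ∑ i, ((x i)^2)^(p/2-1) * (u i)^2 with hWdef
  set N : ℝ := ‖x‖ with hNdef
  set c : ℝ := (inner ℝ x u : ℝ) with hcdef
  have hNpos : 0 < N := by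
    rw [hNdef, norm_pos_iff]
    intro h
    exact hx ⟨0, hd⟩ (by rw [h]; rfl)
  have hSpos : 0 < S := by
    apply Finset.sum_pos
    · intro i _
      exact Real.rpow_pos_of_pos ((sq_nonneg _).lt_of_ne' (pow_ne_zero 2 (hx i))) _
    · exact Finset.univ_nonempty
  have hwpos : ∀ i, (0:ℝ) < ((x i)^2)^(p/2-1) := fun i =>
    Real.rpow_pos_of_pos ((sq_nonneg _).lt_of_ne' (pow_ne_zero 2 (hx i))) _
  have hsx : ∑ i, (x i)^2 = N^2 := by
    rw [hNdef, ← real_inner_self_eq_norm_sq]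
    simp only [PiLp.inner_apply, RCLike.inner_apply, conj_trivial]
    exact Finset.sum_congr rfl fun i _ => sq (x i)
  have hsu : ∑ i, (u i)^2 = ‖u‖^2 := by
    rw [← real_inner_self_eq_norm_sq]
    simp only [PiLp.inner_apply, RCLike.inner_apply, conj_trivial]
    exact Finset.sum_congr rfl fun i _ => sq (u i)
  have hsxu : ∑ i, x i * u i = c := by
    rw [hcdef]
    simp only [PiLp.inner_apply, RCLike.inner_apply, conj_trivial]
    exact Finset.sum_congr rfl fun i _ => mul_comm _ _
  set T : ℝ := G / S with hTdef
  set R : ℝ := ∑ i, ((x i)^2)^(p/2-1) * (u i - T * x i)^2 with hRdef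
  have hR : R = W - 2*T*G + T^2*S := by
    rw [hRdef, hWdef, hGdef, hSdef, Finset.mul_sum, Finset.mul_sum, ← Finset.sum_sub_distrib,
      ← Finset.sum_add_distrib]
    apply Finset.sum_congr rfl
    intro i _
    have key : ((x i)^2:ℝ)^(p/2-1) * (x i)^2 = ((x i)^2)^(p/2) := by
      nth_rewrite 2 [← Real.rpow_one ((x i)^2)]
      rw [← Real.rpow_add ((sq_nonneg _).lt_of_ne' (pow_ne_zero 2 (hx i)))]
      norm_num
    linear_combination (T^2) * key
  have hwlow : ∀ i, N^(p-2) ≤ ((x i)^2)^(p/2-1) := by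
    intro i
    have hxi : (x i)^2 ≤ N^2 := by
      rw [← hsx]
      exact Finset.single_le_sum (fun j _ => sq_nonneg (x j)) (Finset.mem_univ i)
    have h1 := Real.rpow_le_rpow_of_nonpos ((sq_nonneg _).lt_of_ne' (pow_ne_zero 2 (hx i))) hxi
      (by linarith : p/2 - 1 ≤ 0)
    have h2 : ((N:ℝ)^2)^(p/2-1) = N^(p-2) := by
      rw [← Real.rpow_natCast N 2, ← Real.rpow_mul hNpos.le]
      congr 1
      push_cast
      ring
    linarith [h1, h2.symm.le]
  have hRlow : N^(p-2) * (∑ i, (u i - T*x i)^2) ≤ R := by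
    rw [hRdef, Finset.mul_sum]
    exact Finset.sum_le_sum fun i _ => mul_le_mul_of_nonneg_right (hwlow i) (sq_nonneg _)
  have hsum2 : ∑ i, (u i - T*x i)^2 = ‖u‖^2 - 2*T*c + T^2*N^2 := by
    rw [← hsu, ← hsxu, ← hsx, Finset.mul_sum, Finset.mul_sum, ← Finset.sum_sub_distrib,
      ← Finset.sum_add_distrib]
    exact Finset.sum_congr rfl fun i _ => by ring
  have hQle : ‖u‖^2 - c^2/N^2 ≤ ∑ i, (u i - T*x i)^2 := by
    rw [hsum2]
    have key : (T*N - c/N)^2 = T^2*N^2 - 2*T*c + c^2/N^2 := by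
      field_simp
      ring
    nlinarith [sq_nonneg (T*N - c/N)]
  have hQ0 : 0 ≤ ‖u‖^2 - c^2/N^2 := by
    have hcs := real_inner_mul_inner_self_le x u
    rw [real_inner_self_eq_norm_sq, real_inner_self_eq_norm_sq] at hcs
    rw [sub_nonneg, div_le_iff₀ (by positivity : (0:ℝ) < N^2)]
    rw [hcdef]
    nlinarith [hcs]
  have hSsplit : S^(1/p-1:ℝ) = S^(1/p-2:ℝ) * S := by
    nth_rewrite 3 [← Real.rpow_one S]
    rw [← Real.rpow_add hSpos]
    congr 1
    ring
  have hD2 : S^(1/p-1:ℝ)*W - S^(1/p-2:ℝ)*G^2 = S^(1/p-1:ℝ) * R := by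
    rw [hR, hSsplit, hTdef]
    field_simp
    ring
  -- the norm comparison
  have hd1 : (1:ℝ) ≤ (d:ℝ) := by exact_mod_cast hd
  have hd0 : (0:ℝ) < (d:ℝ) := by linarith
  have hS_le : S ≤ (d:ℝ)^((1:ℝ)-p/2) * N^p := by
    have h2p : (1:ℝ) ≤ 2/p := by
      rw [le_div_iff₀ hp0]; linarith
    have ham := Real.arith_mean_le_rpow_mean Finset.univ (fun _ => 1/(d:ℝ))
      (fun i => ((x i)^2)^(p/2)) (fun i _ => by positivity)
      (by
        simp only [Finset.sum_const, Finset.card_univ, Fintype.card_fin, nsmul_eq_mul]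
        field_simp) (fun i _ => by positivity) h2p
    have hpne : p ≠ 0 := ne_of_gt hp0
    have hz : ∀ i : Fin d, (((x i)^2)^(p/2))^(2/p) = (x i)^2 := by
      intro i
      rw [← Real.rpow_mul (sq_nonneg (x i)), show (p/2)*(2/p) = (1:ℝ) by field_simp,
        Real.rpow_one]
    simp only at ham
    have hz' : (∑ i, 1/(d:ℝ) * (((x i)^2)^(p/2))^(2/p)) = 1/(d:ℝ) * N^2 := by
      rw [← hsx, Finset.mul_sum]
      exact Finset.sum_congr rfl fun i _ => by rw [hz i]
    rw [hz', ← Finset.mul_sum, ← hSdef, one_div_div] at ham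
    have step : S ≤ (d:ℝ) * ((1/(d:ℝ)) * N^2)^(p/2) := by
      have h' := mul_le_mul_of_nonneg_left ham hd0.le
      calc S = (d:ℝ) * (1/(d:ℝ) * S) := by field_simp
        _ ≤ _ := h'
    have heq : (d:ℝ) * ((1/(d:ℝ)) * N^2)^(p/2) = (d:ℝ)^((1:ℝ)-p/2) * N^p := by
      rw [Real.mul_rpow (by positivity) (by positivity)]
      rw [one_div, Real.inv_rpow hd0.le, ← Real.rpow_neg hd0.le]
      rw [← Real.rpow_natCast N 2, ← Real.rpow_mul hNpos.le]
      nth_rewrite 1 [← Real.rpow_one (d:ℝ)]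
      rw [← mul_assoc, ← Real.rpow_add hd0]
      rw [show (1:ℝ) + -(p/2) = 1 - p/2 by ring,
        show ((2:ℕ):ℝ)*(p/2) = p by push_cast; ring]
    linarith [step, heq.le]
  -- compare constants
  have hq : (1:ℝ)/p - 1 ≤ 0 := by
    rw [sub_nonpos, div_le_one hp0]; linarith
  have h1 : ((d:ℝ)^((1:ℝ)-p/2) * N^p)^(1/p-1:ℝ) ≤ S^(1/p-1:ℝ) :=
    Real.rpow_le_rpow_of_nonpos hSpos hS_le hq
  have h2 : ((d:ℝ)^((1:ℝ)-p/2) * N^p)^(1/p-1:ℝ)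
      = (d:ℝ)^(((1:ℝ)-p/2)*(1/p-1)) * N^((1:ℝ)-p) := by
    rw [Real.mul_rpow (by positivity) (by positivity), ← Real.rpow_mul hd0.le,
      ← Real.rpow_mul hNpos.le, show p*(1/p-1) = (1:ℝ)-p by field_simp]
  have he : -(3*(2-p))/(2*p) ≤ ((1:ℝ)-p/2)*(1/p-1) := by
    have hrw : ((1:ℝ)-p/2)*(1/p-1) = ((2-p)*(1-p))/(2*p) := by
      field_simp
    rw [hrw, div_le_div_iff₀ (by positivity) (by positivity)]
    nlinarith [mul_nonneg (mul_nonneg (by linarith : (0:ℝ) ≤ 2-p) (by linarith : (0:ℝ) ≤ 4-p))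
      (by positivity : (0:ℝ) ≤ 2*p)]
  have hc2c1 : (d:ℝ)^(-(3*(2-p))/(2*p)) * N⁻¹ ≤ S^(1/p-1:ℝ) * N^(p-2:ℝ) := by
    have hde : (d:ℝ)^(-(3*(2-p))/(2*p)) ≤ (d:ℝ)^(((1:ℝ)-p/2)*(1/p-1)) :=
      Real.rpow_le_rpow_of_exponent_le hd1 he
    have hNN : N^((1:ℝ)-p) * N^(p-2:ℝ) = N⁻¹ := by
      rw [← Real.rpow_add hNpos, show (1:ℝ)-p+(p-2) = -1 by ring, Real.rpow_neg_one]
    calc (d:ℝ)^(-(3*(2-p))/(2*p)) * N⁻¹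
        ≤ (d:ℝ)^(((1:ℝ)-p/2)*(1/p-1)) * N⁻¹ :=
          mul_le_mul_of_nonneg_right hde (by positivity)
      _ = ((d:ℝ)^(((1:ℝ)-p/2)*(1/p-1)) * N^((1:ℝ)-p)) * N^(p-2:ℝ) := by
          rw [mul_assoc, hNN]
      _ ≤ S^(1/p-1:ℝ) * N^(p-2:ℝ) := by
          apply mul_le_mul_of_nonneg_right _ (Real.rpow_nonneg hNpos.le _)
          rw [← h2]
          exact h1
  -- final chain
  have hfin1 : N^(p-2:ℝ) * (‖u‖^2 - c^2/N^2) ≤ R :=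
    le_trans (mul_le_mul_of_nonneg_left hQle (Real.rpow_nonneg hNpos.le _)) hRlow
  calc (p - 1) * (d:ℝ)^(-(3*(2-p))/(2*p)) * N⁻¹ * (‖u‖^2 - c^2/N^2)
      = ((d:ℝ)^(-(3*(2-p))/(2*p)) * N⁻¹) * ((p-1) * (‖u‖^2 - c^2/N^2)) := by ring
    _ ≤ (S^(1/p-1:ℝ) * N^(p-2:ℝ)) * ((p-1) * (‖u‖^2 - c^2/N^2)) :=
        mul_le_mul_of_nonneg_right hc2c1 (mul_nonneg (by linarith) hQ0)
    _ = ((p-1) * S^(1/p-1:ℝ)) * (N^(p-2:ℝ) * (‖u‖^2 - c^2/N^2)) := by ring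
    _ ≤ ((p-1) * S^(1/p-1:ℝ)) * R :=
        mul_le_mul_of_nonneg_left hfin1
          (mul_nonneg (by linarith) (Real.rpow_nonneg hSpos.le _))
    _ = (p-1) * (S^(1/p-1:ℝ) * W - S^(1/p-2:ℝ) * G^2) := by
        rw [hD2]; ring


/-- For `1 < p ≤ 2` and `x ∈ ℝ^d` with all coordinates nonzero, the function
`F(y) = ‖y‖_p` is twice differentiable at `x` (its gradient map `fderiv ℝ F` has a
derivative `H` at `x`), and the Hessian satisfies
`H ⪰ (p − 1) d^{−3(2−p)/(2p)} ‖x‖₂^{−1} (I − x xᵀ/‖x‖₂²)` as a quadratic form. -/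
theorem stmt_12 (d : ℕ) (hd : 1 ≤ d) (p : ℝ) (hp1 : 1 < p) (hp2 : p ≤ 2)
    (x : EuclideanSpace ℝ (Fin d)) (hx : ∀ i, x i ≠ 0) :
    ∃ H : EuclideanSpace ℝ (Fin d) →L[ℝ] EuclideanSpace ℝ (Fin d) →L[ℝ] ℝ,
      HasFDerivAt
        (fderiv ℝ (fun y : EuclideanSpace ℝ (Fin d) => (∑ i, |y i| ^ p) ^ (1 / p)))
        H x ∧
      ∀ u : EuclideanSpace ℝ (Fin d),
        (p - 1) * (d : ℝ) ^ (-(3 * (2 - p)) / (2 * p)) * ‖x‖⁻¹ *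
            (‖u‖ ^ 2 - (inner ℝ x u : ℝ) ^ 2 / ‖x‖ ^ 2) ≤ H u u := by
  have hp0 : (0:ℝ) < p := by linarith
  have hFeq : (fun y : EuclideanSpace ℝ (Fin d) => (∑ i, |y i| ^ p) ^ (1 / p))
      = (fun y : EuclideanSpace ℝ (Fin d) => (∑ i, ((y i)^2) ^ (p/2)) ^ (1/p)) := by
    funext y
    congr 1
    exact Finset.sum_congr rfl fun i _ => (sq_rpow_abs p (y i)).symm
  rw [hFeq]
  refine ⟨fderiv ℝ (fderiv ℝ
    (fun z : EuclideanSpace ℝ (Fin d) => (∑ i, ((z i)^2) ^ (p/2)) ^ (1/p))) x, ?_, ?_⟩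
  · exact (((contDiffF d p hd x hx).fderiv_right (m := 1) (by norm_num)).differentiableAt
      one_ne_zero).hasFDerivAt
  · intro u
    exact (partB d hd p hp1 hp2 x u hx).trans_eq (partA d hd p hp0 x u hx).symm
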